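/- arXiv:2010.05199 — 2 statements merged into one kernel-verified Lean document; each statement's English description precedes it below -/
import Mathlib

section
/- Let $P$ be a monic polynomial of degree $d \ge 2$. For every $z \in \mathbb{C}$ the limit $G(z) = \lim_{n \to \infty} d^{-n} \log^+ |P^n(z)|$ exists, and the resulting Green function satisfies $G(P(z)) = d \cdot G(z)$ for all $z \in \mathbb{C}$. -/
open Polynomial Filter

/-- The complex absolute value, as a bundled absolute value given by the norm. -/
noncomputable def Complex.abs : AbsoluteValue ℂ ℝ where
  toFun := fun z => ‖z‖
  map_mul' := norm_mul
  nonneg' := norm_nonneg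
  eq_zero' := fun _ => norm_eq_zero
  add_le' := norm_add_le

/-- Key estimate: `|log⁺|P(w)| - d log⁺|w||` is uniformly bounded. -/
lemma green_key_estimate (d : ℕ) (hd : 2 ≤ d) (P : Polynomial ℂ)
    (hmonic : P.Monic) (hdeg : P.natDegree = d) :
    ∃ C : ℝ, 0 ≤ C ∧ ∀ w : ℂ,
      |Real.log (max (Complex.abs (P.eval w)) 1)
        - d * Real.log (max (Complex.abs w) 1)| ≤ C := by
  set M : ℝ := ∑ i ∈ Finset.range (d + 1), Complex.abs (P.coeff i) with hMdef
  have hcd : Complex.abs (P.coeff d) = 1 := by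
    rw [← hdeg, hmonic.coeff_natDegree, map_one]
  have hM1 : 1 ≤ M := by
    rw [← hcd]
    exact Finset.single_le_sum (fun i _ => (Complex.abs.nonneg _))
      (Finset.self_mem_range_succ d)
  have hM0 : 0 < M := lt_of_lt_of_le one_pos hM1
  -- upper bound
  have hub : ∀ w : ℂ, Complex.abs (P.eval w) ≤ M * max (Complex.abs w) 1 ^ d := by
    intro w
    have h1 : 1 ≤ max (Complex.abs w) 1 := le_max_right _ _
    calc Complex.abs (P.eval w)
        = Complex.abs (∑ i ∈ Finset.range (d + 1), P.coeff i * w ^ i) := by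
          rw [Polynomial.eval_eq_sum_range, hdeg]
      _ ≤ ∑ i ∈ Finset.range (d + 1), Complex.abs (P.coeff i * w ^ i) :=
          Complex.abs.sum_le _ _
      _ ≤ ∑ i ∈ Finset.range (d + 1), Complex.abs (P.coeff i) * max (Complex.abs w) 1 ^ d := by
          refine Finset.sum_le_sum fun i hi => ?_
          rw [map_mul, map_pow]
          refine mul_le_mul_of_nonneg_left ?_ (Complex.abs.nonneg _)
          calc Complex.abs w ^ i ≤ max (Complex.abs w) 1 ^ i :=
                pow_le_pow_left₀ (Complex.abs.nonneg _) (le_max_left _ _) i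
            _ ≤ max (Complex.abs w) 1 ^ d :=
                pow_le_pow_right₀ h1 (Nat.lt_succ_iff.mp (Finset.mem_range.mp hi))
      _ = M * max (Complex.abs w) 1 ^ d := by rw [← Finset.sum_mul]
  -- lower bound for large |w|
  have hlb : ∀ w : ℂ, 2 * M ≤ Complex.abs w →
      Complex.abs w ^ d / 2 ≤ Complex.abs (P.eval w) := by
    intro w hw
    have hw1 : 1 ≤ Complex.abs w := le_trans (by linarith) hw
    have heval : P.eval w = (∑ i ∈ Finset.range d, P.coeff i * w ^ i) + w ^ d := by
      rw [Polynomial.eval_eq_sum_range, hdeg, Finset.sum_range_succ]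
      have : P.coeff d = 1 := by rw [← hdeg]; exact hmonic.coeff_natDegree
      rw [this, one_mul]
    have hS : Complex.abs (∑ i ∈ Finset.range d, P.coeff i * w ^ i)
        ≤ M * Complex.abs w ^ (d - 1) := by
      calc Complex.abs (∑ i ∈ Finset.range d, P.coeff i * w ^ i)
          ≤ ∑ i ∈ Finset.range d, Complex.abs (P.coeff i * w ^ i) :=
            Complex.abs.sum_le _ _
        _ ≤ ∑ i ∈ Finset.range d, Complex.abs (P.coeff i) * Complex.abs w ^ (d - 1) := by
            refine Finset.sum_le_sum fun i hi => ?_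
            rw [map_mul, map_pow]
            refine mul_le_mul_of_nonneg_left ?_ (Complex.abs.nonneg _)
            exact pow_le_pow_right₀ hw1 (Nat.le_sub_one_of_lt (Finset.mem_range.mp hi))
        _ ≤ M * Complex.abs w ^ (d - 1) := by
            rw [← Finset.sum_mul]
            refine mul_le_mul_of_nonneg_right ?_ (pow_nonneg (Complex.abs.nonneg _) _)
            exact Finset.sum_le_sum_of_subset_of_nonneg
              (Finset.range_subset_range.mpr (Nat.le_succ d))
              (fun i _ _ => Complex.abs.nonneg _)
    have habs : Complex.abs w ^ d - M * Complex.abs w ^ (d - 1)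
        ≤ Complex.abs (P.eval w) := by
      set S : ℂ := ∑ i ∈ Finset.range d, P.coeff i * w ^ i with hSdef
      have h4 : Complex.abs (w ^ d) ≤ Complex.abs (S + w ^ d) + Complex.abs S := by
        have h5 := Complex.abs.add_le (S + w ^ d) (-S)
        simpa using h5
      rw [heval]
      rw [map_pow] at h4
      linarith [hS]
    have hpow : Complex.abs w ^ d = Complex.abs w ^ (d - 1) * Complex.abs w := by
      rw [← pow_succ]
      congr 1
      omega
    have hnn : 0 ≤ Complex.abs w ^ (d - 1) := pow_nonneg (Complex.abs.nonneg _) _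
    nlinarith [hS, habs]
  -- combine
  set R : ℝ := max (2 * M) 2 with hRdef
  have hR2 : (2:ℝ) ≤ R := le_max_right _ _
  have hR0 : (0:ℝ) < R := by linarith
  have hlogR0 : 0 ≤ Real.log R := Real.log_nonneg (by linarith)
  have hlogM0 : 0 ≤ Real.log M := Real.log_nonneg hM1
  have hd1 : (1:ℝ) ≤ d := by exact_mod_cast (by omega : 1 ≤ d)
  refine ⟨Real.log M + d * Real.log R, by positivity, fun w => ?_⟩
  set A : ℝ := max (Complex.abs w) 1 with hAdef
  have hA1 : (1:ℝ) ≤ A := le_max_right _ _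
  have hA0 : (0:ℝ) < A := by linarith
  have hup : Real.log (max (Complex.abs (P.eval w)) 1) ≤ Real.log M + d * Real.log A := by
    have h1 : max (Complex.abs (P.eval w)) 1 ≤ M * A ^ d := by
      refine max_le (hub w) ?_
      have h2 : (1:ℝ) ≤ A ^ d := one_le_pow₀ hA1
      nlinarith
    calc Real.log (max (Complex.abs (P.eval w)) 1)
        ≤ Real.log (M * A ^ d) := Real.log_le_log (by positivity) h1
      _ = Real.log M + d * Real.log A := by
          rw [Real.log_mul (ne_of_gt hM0) (by positivity), Real.log_pow]
  have hlow : (d:ℝ) * Real.log A - d * Real.log R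
      ≤ Real.log (max (Complex.abs (P.eval w)) 1) := by
    by_cases hwR : R ≤ Complex.abs w
    · have hMw : 2 * M ≤ Complex.abs w := le_trans (le_max_left _ _) hwR
      have hw2 : (2:ℝ) ≤ Complex.abs w := le_trans hR2 hwR
      have hAw : A = Complex.abs w := max_eq_left (by linarith)
      have h6 := hlb w hMw
      have h8 : Complex.abs w ^ d / 2 ≤ max (Complex.abs (P.eval w)) 1 :=
        le_trans h6 (le_max_left _ _)
      have h9 : Real.log (Complex.abs w ^ d / 2)
          ≤ Real.log (max (Complex.abs (P.eval w)) 1) :=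
        Real.log_le_log (by positivity) h8
      have h10 : Real.log (Complex.abs w ^ d / 2)
          = d * Real.log (Complex.abs w) - Real.log 2 := by
        rw [Real.log_div (by positivity) two_ne_zero, Real.log_pow]
      have h11 : Real.log 2 ≤ Real.log R := Real.log_le_log two_pos hR2
      have h12 : Real.log R ≤ d * Real.log R := by nlinarith [hd1, hlogR0]
      rw [hAw]
      linarith
    · have hA' : A ≤ R := max_le (le_of_lt (lt_of_not_ge hwR)) (by linarith)
      have h13 : Real.log A ≤ Real.log R := Real.log_le_log hA0 hA'
      have h14 : (d:ℝ) * Real.log A ≤ d * Real.log R :=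
        mul_le_mul_of_nonneg_left h13 (by positivity)
      have h15 : 0 ≤ Real.log (max (Complex.abs (P.eval w)) 1) :=
        Real.log_nonneg (le_max_right _ _)
      linarith
  have h16 : 0 ≤ (d:ℝ) * Real.log R := by positivity
  rw [abs_le]
  constructor <;> linarith

/-- For a monic polynomial of degree `d ≥ 2`, the Green function
`G(z) = lim_{n} d^{-n} log⁺ |P^n(z)|` exists at every point and satisfies
`G(P(z)) = d ⬝ G(z)`. -/
theorem green_function_exists (d : ℕ) (hd : 2 ≤ d) (P : Polynomial ℂ)
    (hmonic : P.Monic) (hdeg : P.natDegree = d) :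
    ∃ G : ℂ → ℝ,
      (∀ z : ℂ, Filter.Tendsto
        (fun n : ℕ => Real.log (max (‖(fun w => P.eval w)^[n] z‖) 1) / d ^ n)
        Filter.atTop (nhds (G z))) ∧
      ∀ z : ℂ, G (P.eval z) = d * G z := by
  obtain ⟨C, hC0, hC⟩ := green_key_estimate d hd P hmonic hdeg
  set L : ℂ → ℝ := fun w => Real.log (max (Complex.abs w) 1) with hLdef
  set F : ℂ → ℕ → ℝ :=
    fun z n => Real.log (max (Complex.abs ((fun w => P.eval w)^[n] z)) 1) / d ^ n
    with hFdef
  have hd0 : (0:ℝ) < d := by positivity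
  have hd1 : (1:ℝ) ≤ d := by exact_mod_cast le_trans one_le_two hd
  have hd2 : (2:ℝ) ≤ d := by exact_mod_cast hd
  have hdn0 : ∀ n : ℕ, (0:ℝ) < (d:ℝ) ^ n := fun n => pow_pos hd0 n
  have hdiff : ∀ z n, F z (n + 1) - F z n
      = (L (P.eval ((fun w => P.eval w)^[n] z))
          - d * L ((fun w => P.eval w)^[n] z)) / d ^ (n + 1) := by
    intro z n
    simp only [hFdef, hLdef, Function.iterate_succ_apply']
    rw [pow_succ]
    field_simp
  have hdist : ∀ z n, dist (F z n) (F z (n + 1)) ≤ (C / d) * (1 / d) ^ n := by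
    intro z n
    rw [dist_comm, Real.dist_eq, hdiff z n, abs_div,
      abs_of_pos (hdn0 (n + 1))]
    rw [div_le_iff₀ (hdn0 (n + 1))]
    have := hC ((fun w => P.eval w)^[n] z)
    calc |L (P.eval ((fun w => P.eval w)^[n] z))
          - d * L ((fun w => P.eval w)^[n] z)| ≤ C := this
      _ = (C / d) * (1 / d) ^ n * d ^ (n + 1) := by
          rw [pow_succ]
          field_simp
          rw [mul_assoc, ← mul_pow, one_div_mul_cancel hd0.ne', one_pow, mul_one]
  have hcauchy : ∀ z, CauchySeq (F z) := fun z =>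
    cauchySeq_of_le_geometric (1 / d) (C / d)
      (by rw [div_lt_one hd0]; linarith) (hdist z)
  have hconv : ∀ z, ∃ l, Tendsto (F z) atTop (nhds l) := fun z =>
    cauchySeq_tendsto_of_complete (hcauchy z)
  choose G hG using hconv
  refine ⟨G, hG, fun z => ?_⟩
  have h2 : ∀ n, F (P.eval z) n = d * F z (n + 1) := by
    intro n
    simp only [hFdef, ← Function.iterate_succ_apply]
    rw [pow_succ]
    field_simp
  have h3 : Tendsto (fun n => (d:ℝ) * F z (n + 1)) atTop (nhds (d * G z)) :=
    Tendsto.const_mul _ ((hG z).comp (tendsto_add_atTop_nat 1))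
  have h1 : Tendsto (F (P.eval z)) atTop (nhds (d * G z)) := by
    simpa only [← h2] using h3
  exact tendsto_nhds_unique (hG (P.eval z)) h1
end

section
/- Let $\varphi : U \to \mathbb{C}$ be real-differentiable at $z \in U$ with positive Jacobian determinant, and write $\partial \varphi(z)$ and $\bar\partial \varphi(z)$ for the Wirtinger derivatives, so that $|\partial\varphi(z)| > |\bar\partial\varphi(z)|$. Then the circular distortion satisfies $H(\varphi; z) = \dfrac{|\partial\varphi(z)| + |\bar\partial\varphi(z)|}{|\partial\varphi(z)| - |\bar\partial\varphi(z)|}$. -/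
open Filter Metric

/-- Circular distortion of a map at a point. -/
noncomputable def circDist (φ : ℂ → ℂ) (w : ℂ) : ENNReal :=
  Filter.limsup
    (fun r : ℝ =>
      (⨆ u ∈ Metric.sphere w r, edist (φ u) (φ w)) /
      (⨅ u ∈ Metric.sphere w r, edist (φ u) (φ w)))
    (nhdsWithin 0 (Set.Ioi 0))

/-- The Wirtinger derivative `∂φ` of a real-linear map `L` on `ℂ`. -/
noncomputable def wirtingerP (L : ℂ →L[ℝ] ℂ) : ℂ :=
  (L 1 - Complex.I * L Complex.I) / 2

/-- The Wirtinger derivative `∂̄φ` of a real-linear map `L` on `ℂ`. -/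
noncomputable def wirtingerQ (L : ℂ →L[ℝ] ℂ) : ℂ :=
  (L 1 + Complex.I * L Complex.I) / 2

private lemma L_repr (L : ℂ →L[ℝ] ℂ) (v : ℂ) :
    L v = wirtingerP L * v + wirtingerQ L * (starRingEnd ℂ) v := by
  have hri : (v.re : ℂ) + (v.im : ℂ) * Complex.I = v := Complex.re_add_im v
  have hv : v = (v.re : ℝ) • (1:ℂ) + (v.im : ℝ) • Complex.I := by
    simp [Complex.real_smul]
  have hc : (starRingEnd ℂ) v = (v.re : ℂ) - (v.im : ℂ) * Complex.I := by
    apply Complex.ext <;> simp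
  conv_lhs => rw [hv]
  rw [map_add, map_smul, map_smul, hc]
  simp only [wirtingerP, wirtingerQ, Complex.real_smul]
  linear_combination ((v.im:ℂ) * L Complex.I) * Complex.I_sq +
    ((L 1 - Complex.I * L Complex.I)/2) * hri

private lemma exists_sqrt (s : ℂ) (hs : s ≠ 0) : ∃ v : ℂ, v ^ 2 = s :=
  ⟨Complex.exp (Complex.log s / 2), by rw [sq, ← Complex.exp_add, add_halves, Complex.exp_log hs]⟩

private lemma abs_attained (p q s : ℂ) (hs : ‖s‖ = 1) :
    ∃ v : ℂ, ‖v‖ = 1 ∧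
      ‖p * v + q * (starRingEnd ℂ) v‖ = ‖p * s + q‖ := by
  have hs0 : s ≠ 0 := by
    intro h; rw [h] at hs; simp at hs
  obtain ⟨v, hv2⟩ := exists_sqrt s hs0
  have hva : ‖v‖ = 1 := by
    have h2 : ‖v‖ ^ 2 = 1 := by rw [← norm_pow, hv2, hs]
    have h3 : (‖v‖ - 1) * (‖v‖ + 1) = 0 := by linear_combination h2
    rcases mul_eq_zero.mp h3 with h | h
    · linarith
    · have := norm_nonneg v; linarith
  have hv0 : v ≠ 0 := by
    intro h; rw [h] at hva; simp at hva
  have hconj : (starRingEnd ℂ) v = v⁻¹ := by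
    have h := Complex.mul_conj v
    have hn : (Complex.normSq v : ℂ) = 1 := by
      rw [Complex.normSq_eq_norm_sq, hva]; norm_num
    rw [hn] at h
    exact (inv_eq_of_mul_eq_one_right h).symm
  refine ⟨v, hva, ?_⟩
  have key : p * v + q * v⁻¹ = v⁻¹ * (p * s + q) := by
    field_simp
    linear_combination p * hv2
  rw [hconj, key, norm_mul, norm_inv, hva]
  norm_num

private lemma exists_max (p q : ℂ) (hpq : ‖q‖ < ‖p‖) :
    ∃ v : ℂ, ‖v‖ = 1 ∧
      ‖p * v + q * (starRingEnd ℂ) v‖ = ‖p‖ + ‖q‖ := by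
  have hp : p ≠ 0 := by
    exact norm_pos_iff.mp (lt_of_le_of_lt (norm_nonneg q) hpq)
  have hp' : ‖p‖ ≠ 0 := norm_ne_zero_iff.mpr hp
  by_cases hq : q = 0
  · obtain ⟨v, hv1, hv2⟩ := abs_attained p q 1 (by simp)
    refine ⟨v, hv1, ?_⟩
    rw [hv2, hq]; simp
  · have hq' : ‖q‖ ≠ 0 := norm_ne_zero_iff.mpr hq
    have hqc : ((‖q‖ : ℝ) : ℂ) ≠ 0 := Complex.ofReal_ne_zero.mpr hq'
    set s : ℂ := (q * (‖p‖ : ℂ)) / (p * (‖q‖ : ℂ)) with hs_def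
    have hs : ‖s‖ = 1 := by
      rw [hs_def, norm_div, norm_mul, norm_mul, Complex.norm_of_nonneg (norm_nonneg p),
        Complex.norm_of_nonneg (norm_nonneg q)]
      field_simp [mul_comm]
    obtain ⟨v, hv1, hv2⟩ := abs_attained p q s hs
    refine ⟨v, hv1, ?_⟩
    rw [hv2]
    have key : p * s + q = q * (((‖p‖ + ‖q‖) / ‖q‖ : ℝ) : ℂ) := by
      rw [hs_def]
      push_cast
      field_simp [hp, hqc]
    rw [key, norm_mul, Complex.norm_real, Real.norm_eq_abs,
      _root_.abs_of_nonneg (by positivity : (0:ℝ) ≤ (‖p‖ + ‖q‖) / ‖q‖)]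
    field_simp

private lemma exists_min (p q : ℂ) (hpq : ‖q‖ < ‖p‖) :
    ∃ v : ℂ, ‖v‖ = 1 ∧
      ‖p * v + q * (starRingEnd ℂ) v‖ = ‖p‖ - ‖q‖ := by
  have hp : p ≠ 0 := by
    exact norm_pos_iff.mp (lt_of_le_of_lt (norm_nonneg q) hpq)
  have hp' : ‖p‖ ≠ 0 := norm_ne_zero_iff.mpr hp
  by_cases hq : q = 0
  · obtain ⟨v, hv1, hv2⟩ := abs_attained p q 1 (by simp)
    refine ⟨v, hv1, ?_⟩
    rw [hv2, hq]; simp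
  · have hq' : ‖q‖ ≠ 0 := norm_ne_zero_iff.mpr hq
    have hqc : ((‖q‖ : ℝ) : ℂ) ≠ 0 := Complex.ofReal_ne_zero.mpr hq'
    set s : ℂ := -((q * (‖p‖ : ℂ)) / (p * (‖q‖ : ℂ))) with hs_def
    have hs : ‖s‖ = 1 := by
      rw [hs_def, norm_neg, norm_div, norm_mul, norm_mul,
        Complex.norm_of_nonneg (norm_nonneg p),
        Complex.norm_of_nonneg (norm_nonneg q)]
      field_simp [mul_comm]
    obtain ⟨v, hv1, hv2⟩ := abs_attained p q s hs
    refine ⟨v, hv1, ?_⟩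
    rw [hv2]
    have key : p * s + q = q * (((‖q‖ - ‖p‖) / ‖q‖ : ℝ) : ℂ) := by
      rw [hs_def]
      push_cast
      field_simp [hp, hqc]
      ring
    rw [key, norm_mul, Complex.norm_real, Real.norm_eq_abs,
      _root_.abs_of_nonpos (by
        have h0 : 0 < ‖q‖ := lt_of_le_of_ne (norm_nonneg q) (Ne.symm hq')
        apply div_nonpos_of_nonpos_of_nonneg <;> linarith)]
    field_simp
    ring

/-- At a point of differentiability with positive Jacobian, the circular distortion equals
`(|∂φ| + |∂̄φ|)/(|∂φ| - |∂̄φ|)`. -/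
theorem circDist_eq_wirtinger (φ : ℂ → ℂ) (z : ℂ) (L : ℂ →L[ℝ] ℂ)
    (hderiv : HasFDerivAt φ L z)
    (hjac : ‖wirtingerQ L‖ < ‖wirtingerP L‖) :
    circDist φ z = ENNReal.ofReal
      ((‖wirtingerP L‖ + ‖wirtingerQ L‖) /
       (‖wirtingerP L‖ - ‖wirtingerQ L‖)) := by
  set p := wirtingerP L with hp_def
  set q := wirtingerQ L with hq_def
  set A : ℝ := ‖p‖ + ‖q‖ with hA_def
  set B : ℝ := ‖p‖ - ‖q‖ with hB_def
  have hB : 0 < B := sub_pos.mpr hjac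
  have hBA : B ≤ A := by
    have := norm_nonneg q; simp only [hA_def, hB_def]; linarith
  have hA : 0 < A := lt_of_lt_of_le hB hBA
  -- norm bounds for L
  have hLub : ∀ v : ℂ, ‖L v‖ ≤ A * ‖v‖ := by
    intro v
    rw [L_repr]
    refine le_trans (norm_add_le _ _) (le_of_eq ?_)
    simp only [norm_mul, Complex.norm_conj]
    ring
  have hLlb : ∀ v : ℂ, B * ‖v‖ ≤ ‖L v‖ := by
    intro v
    rw [L_repr]
    have h := norm_add_le (p * v + q * (starRingEnd ℂ) v) (-(q * (starRingEnd ℂ) v))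
    simp only [add_neg_cancel_right, norm_neg] at h
    have h2 : ‖q * (starRingEnd ℂ) v‖ = ‖q‖ * ‖v‖ := by
      simp [norm_mul, Complex.norm_conj]
    have h3 : ‖p * v‖ = ‖p‖ * ‖v‖ := by
      simp [norm_mul]
    rw [h2, h3] at h
    have h5 : ‖v‖ = ‖v‖ := rfl
    rw [hB_def, h5]
    linarith
  have hmax : ∃ v : ℂ, ‖v‖ = 1 ∧ ‖L v‖ = A := by
    obtain ⟨v, hv1, hv2⟩ := exists_max p q hjac
    exact ⟨v, by simp [hv1], by rw [L_repr]; simpa⟩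
  have hmin : ∃ v : ℂ, ‖v‖ = 1 ∧ ‖L v‖ = B := by
    obtain ⟨v, hv1, hv2⟩ := exists_min p q hjac
    exact ⟨v, by simp [hv1], by rw [L_repr]; simpa⟩
  set S : ℝ → ENNReal := fun r => ⨆ u ∈ Metric.sphere z r, edist (φ u) (φ z) with hS_def
  set In : ℝ → ENNReal := fun r => ⨅ u ∈ Metric.sphere z r, edist (φ u) (φ z) with hIn_def
  -- eventual bounds
  have hbnd : ∀ t : ℝ, 0 < t → ∀ᶠ r in nhdsWithin (0:ℝ) (Set.Ioi 0),
      S r ≤ ENNReal.ofReal ((A + t) * r) ∧ ENNReal.ofReal ((A - t) * r) ≤ S r ∧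
      In r ≤ ENNReal.ofReal ((B + t) * r) ∧ ENNReal.ofReal ((B - t) * r) ≤ In r := by
    intro t ht
    have hlo : ∀ᶠ u in nhds z, ‖φ u - φ z - L (u - z)‖ ≤ t * ‖u - z‖ :=
      hderiv.isLittleO.def ht
    rw [Metric.eventually_nhds_iff] at hlo
    obtain ⟨δ, hδ, hlo⟩ := hlo
    filter_upwards [Ioo_mem_nhdsGT_of_mem (Set.mem_Ico.mpr ⟨le_refl 0, hδ⟩)] with r hr
    obtain ⟨hr0, hrδ⟩ := hr
    have hsphere : ∀ u ∈ Metric.sphere z r,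
        ‖L (u - z)‖ - t * r ≤ ‖φ u - φ z‖ ∧ ‖φ u - φ z‖ ≤ ‖L (u - z)‖ + t * r := by
      intro u hu
      have hdist : dist u z = r := hu
      have h1 : ‖u - z‖ = r := by rwa [← dist_eq_norm]
      have h2 : ‖φ u - φ z - L (u - z)‖ ≤ t * r := by
        have := hlo (show dist u z < δ by rw [hdist]; exact hrδ)
        rwa [h1] at this
      constructor
      · have h5 : ‖L (u - z)‖ ≤ ‖φ u - φ z‖ + ‖φ u - φ z - L (u - z)‖ := by
          calc ‖L (u - z)‖ = ‖(φ u - φ z) + (L (u - z) - (φ u - φ z))‖ := by congr 1; ring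
          _ ≤ ‖φ u - φ z‖ + ‖L (u - z) - (φ u - φ z)‖ := norm_add_le _ _
          _ = ‖φ u - φ z‖ + ‖φ u - φ z - L (u - z)‖ := by rw [norm_sub_rev (L (u - z))]
        linarith
      · have h5 : ‖φ u - φ z‖ ≤ ‖L (u - z)‖ + ‖φ u - φ z - L (u - z)‖ := by
          refine le_trans (le_of_eq ?_) (norm_add_le _ _)
          congr 1; ring
        linarith
    refine ⟨?_, ?_, ?_, ?_⟩
    · refine iSup₂_le fun u hu => ?_
      rw [edist_dist]
      refine ENNReal.ofReal_le_ofReal ?_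
      rw [dist_eq_norm]
      have h1 : ‖u - z‖ = r := by
        rw [← dist_eq_norm]; exact hu
      have := (hsphere u hu).2
      have hub := hLub (u - z)
      rw [h1] at hub
      nlinarith
    · obtain ⟨v, hv1, hv2⟩ := hmax
      have humem : z + r • v ∈ Metric.sphere z r := by
        simp [Metric.mem_sphere, dist_eq_norm, norm_smul, hv1, abs_of_pos hr0]
      refine le_trans ?_ (le_iSup₂_of_le (z + r • v) humem (le_refl _))
      rw [edist_dist, dist_eq_norm]
      refine ENNReal.ofReal_le_ofReal ?_
      have hnorm : ‖L ((z + r • v) - z)‖ = A * r := by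
        rw [add_sub_cancel_left z (r • v), map_smul, norm_smul, hv2,
          Real.norm_eq_abs, abs_of_pos hr0]
        ring
      have := (hsphere _ humem).1
      rw [hnorm] at this
      nlinarith
    · obtain ⟨v, hv1, hv2⟩ := hmin
      have humem : z + r • v ∈ Metric.sphere z r := by
        simp [Metric.mem_sphere, dist_eq_norm, norm_smul, hv1, abs_of_pos hr0]
      refine le_trans (iInf₂_le_of_le (z + r • v) humem (le_refl _)) ?_
      rw [edist_dist, dist_eq_norm]
      refine ENNReal.ofReal_le_ofReal ?_
      have hnorm : ‖L ((z + r • v) - z)‖ = B * r := by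
        rw [add_sub_cancel_left z (r • v), map_smul, norm_smul, hv2,
          Real.norm_eq_abs, abs_of_pos hr0]
        ring
      have := (hsphere _ humem).2
      rw [hnorm] at this
      nlinarith
    · refine le_iInf₂ fun u hu => ?_
      rw [edist_dist]
      refine ENNReal.ofReal_le_ofReal ?_
      rw [dist_eq_norm]
      have h1 : ‖u - z‖ = r := by
        rw [← dist_eq_norm]; exact hu
      have := (hsphere u hu).1
      have hlb := hLlb (u - z)
      rw [h1] at hlb
      nlinarith
  -- eventual equality with a real-valued ratio
  have hEq : ∀ᶠ r in nhdsWithin (0:ℝ) (Set.Ioi 0),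
      S r / In r = ENNReal.ofReal ((S r).toReal / (In r).toReal) := by
    filter_upwards [hbnd (B/2) (half_pos hB), self_mem_nhdsWithin] with r hr hr0
    obtain ⟨h1, h2, h3, h4⟩ := hr
    have hrpos : (0:ℝ) < r := hr0
    have hSne : S r ≠ ⊤ := ne_top_of_le_ne_top ENNReal.ofReal_ne_top h1
    have hIne : In r ≠ 0 := by
      refine ne_of_gt (lt_of_lt_of_le ?_ h4)
      rw [ENNReal.ofReal_pos]
      nlinarith
    have hne_top : S r / In r ≠ ⊤ := (ENNReal.div_lt_top hSne hIne).ne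
    rw [← ENNReal.toReal_div, ENNReal.ofReal_toReal hne_top]
  -- real convergence
  have hK : Tendsto (fun r => (S r).toReal / (In r).toReal)
      (nhdsWithin (0:ℝ) (Set.Ioi 0)) (nhds (A/B)) := by
    rw [Metric.tendsto_nhds]
    intro ε hε
    have hg : Tendsto (fun t : ℝ => (A + t)/(B - t)) (nhds 0) (nhds (A/B)) := by
      have h0 : Tendsto (fun t : ℝ => (A + t)/(B - t)) (nhds 0) (nhds ((A+0)/(B-0))) :=
        Tendsto.div (tendsto_const_nhds.add tendsto_id) (tendsto_const_nhds.sub tendsto_id)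
          (by simpa using hB.ne')
      simpa using h0
    have hl : Tendsto (fun t : ℝ => (A - t)/(B + t)) (nhds 0) (nhds (A/B)) := by
      have h0 : Tendsto (fun t : ℝ => (A - t)/(B + t)) (nhds 0) (nhds ((A-0)/(B+0))) :=
        Tendsto.div (tendsto_const_nhds.sub tendsto_id) (tendsto_const_nhds.add tendsto_id)
          (by simpa using hB.ne')
      simpa using h0
    have h1 := hg.eventually_lt_const (show A/B < A/B + ε by linarith)
    have h2 := hl.eventually_const_lt (show A/B - ε < A/B by linarith)
    have h3 : ∀ᶠ t : ℝ in nhds 0, t < B := tendsto_id.eventually_lt_const hB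
    obtain ⟨t, ⟨ht1, ht2, ht3⟩, ht0⟩ :=
      (((h1.and (h2.and h3)).filter_mono (nhdsWithin_le_nhds (s := Set.Ioi (0:ℝ)))).and
        (self_mem_nhdsWithin : ∀ᶠ t in nhdsWithin (0:ℝ) (Set.Ioi 0), t ∈ Set.Ioi 0)).exists
    have ht0' : (0:ℝ) < t := ht0
    filter_upwards [hbnd t ht0', self_mem_nhdsWithin] with r hr hrmem
    obtain ⟨hS1, hS2, hI1, hI2⟩ := hr
    have hrpos : (0:ℝ) < r := hrmem
    have hBt : 0 < B - t := by linarith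
    have hAt : 0 < A - t := by linarith
    have hSne : S r ≠ ⊤ := ne_top_of_le_ne_top ENNReal.ofReal_ne_top hS1
    have hIne : In r ≠ ⊤ := ne_top_of_le_ne_top ENNReal.ofReal_ne_top hI1
    have hSub : (S r).toReal ≤ (A + t) * r :=
      ENNReal.toReal_le_of_le_ofReal (by positivity) hS1
    have hSlb : (A - t) * r ≤ (S r).toReal := by
      have := ENNReal.toReal_mono hSne hS2
      rwa [ENNReal.toReal_ofReal (by positivity)] at this
    have hIub : (In r).toReal ≤ (B + t) * r :=
      ENNReal.toReal_le_of_le_ofReal (by positivity) hI1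
    have hIlb : (B - t) * r ≤ (In r).toReal := by
      have := ENNReal.toReal_mono hIne hI2
      rwa [ENNReal.toReal_ofReal (by positivity)] at this
    have hIpos : 0 < (In r).toReal := lt_of_lt_of_le (by positivity) hIlb
    have hup : (S r).toReal / (In r).toReal ≤ (A + t)/(B - t) := by
      rw [← mul_div_mul_right (A+t) (B-t) hrpos.ne']
      exact div_le_div₀ (by positivity) hSub (by positivity) hIlb
    have hdown : (A - t)/(B + t) ≤ (S r).toReal / (In r).toReal := by
      rw [← mul_div_mul_right (A-t) (B+t) hrpos.ne']
      exact div_le_div₀ (by positivity) hSlb hIpos hIub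
    rw [Real.dist_eq, abs_sub_lt_iff]
    constructor <;> linarith
  have hfinal : Tendsto (fun r => S r / In r) (nhdsWithin (0:ℝ) (Set.Ioi 0))
      (nhds (ENNReal.ofReal (A/B))) :=
    Tendsto.congr' (hEq.mono fun r h => h.symm) ((ENNReal.continuous_ofReal.tendsto _).comp hK)
  rw [circDist]
  exact hfinal.limsup_eq
end
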